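/- arXiv:0807.2615 — 4 statements merged into one kernel-verified Lean document; each statement's English description precedes it below -/
import Mathlib

section
/- For any 2×2 density matrix ρ ≠ I/2, there exist rank-one projections X = |a⟩⟨a| and Y = |d⟩⟨d| such that Tr(ρ(XY + YX)) < 0. -/
open scoped ComplexOrder
open Matrix

lemma re_calc (n t γ p : ℝ) (A B : ℂ) (hA : A.re = γ) (hB : B.re = p) (hBim : B.im = 0) :
    (((n:ℝ):ℂ) * (t:ℂ) * (((n:ℝ):ℂ) * (A + (t:ℂ) * B))).re = n^2 * (t * γ + t^2 * p) := by
  simp only [Complex.mul_re, Complex.mul_im, Complex.add_re, Complex.add_im,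
    Complex.ofReal_re, Complex.ofReal_im, hA, hB, hBim]
  ring

lemma key (ρ : Matrix (Fin 2) (Fin 2) ℂ) (hρ : ρ.PosSemidef)
    (e f : Fin 2 → ℂ) (he : star e ⬝ᵥ e = 1) (hf : star f ⬝ᵥ f = 1)
    (hef : star e ⬝ᵥ f = 0)
    (hγ : (star f ⬝ᵥ (ρ *ᵥ e)).re ≠ 0) :
    ∃ a d : Fin 2 → ℂ, star a ⬝ᵥ a = 1 ∧ star d ⬝ᵥ d = 1 ∧
      (ρ * (Matrix.vecMulVec a (star a) * Matrix.vecMulVec d (star d)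
        + Matrix.vecMulVec d (star d) * Matrix.vecMulVec a (star a))).trace.re < 0 := by
  obtain ⟨γ, hγdef⟩ : ∃ γ:ℝ, γ = (star f ⬝ᵥ (ρ *ᵥ e)).re := ⟨_, rfl⟩
  rw [← hγdef] at hγ
  have hq := hρ.dotProduct_mulVec_nonneg e
  rw [Complex.le_def] at hq
  obtain ⟨p, hpdef⟩ : ∃ p:ℝ, p = (star e ⬝ᵥ (ρ *ᵥ e)).re := ⟨_, rfl⟩
  have hp0 : 0 ≤ p := by rw [hpdef]; simpa using hq.1
  have hpim : (star e ⬝ᵥ (ρ *ᵥ e)).im = 0 := by simpa using hq.2.symm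
  obtain ⟨t, htdef⟩ : ∃ t:ℝ, t = -γ / (2 * (p + 1)) := ⟨_, rfl⟩
  have hN0 : (0:ℝ) < 1 + t ^ 2 := by positivity
  obtain ⟨N, hNdef⟩ : ∃ N:ℝ, N = Real.sqrt (1 + t ^ 2) := ⟨_, rfl⟩
  have hNpos : 0 < N := hNdef ▸ Real.sqrt_pos.mpr hN0
  have hNsq : N ^ 2 = 1 + t ^ 2 := hNdef ▸ Real.sq_sqrt hN0.le
  set d : Fin 2 → ℂ := ((N⁻¹ : ℝ) : ℂ) • (f + (t:ℂ) • e) with hddef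
  have hfe : star f ⬝ᵥ e = 0 := by
    have := congrArg star hef
    simpa [dotProduct, Fin.sum_univ_two, star_add, star_mul', mul_comm] using this
  have hstard : star d = ((N⁻¹ : ℝ) : ℂ) • (star f + (t:ℂ) • star e) := by
    rw [hddef]
    simp [star_smul, star_add, Complex.star_def, Complex.conj_ofReal]
  have hNne : ((N:ℝ):ℂ) ≠ 0 := by exact_mod_cast hNpos.ne'
  have hcast : ((N:ℝ):ℂ)^2 = 1 + (t:ℂ)^2 := by exact_mod_cast congrArg (fun x:ℝ => (x:ℂ)) hNsq
  have hN2 : ((N⁻¹:ℝ):ℂ) * ((N⁻¹:ℝ):ℂ) * (1 + (t:ℂ)^2) = 1 := by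
    push_cast
    rw [← hcast, pow_two]
    field_simp
  refine ⟨e, d, he, ?_, ?_⟩
  · rw [hddef, hstard]
    rw [smul_dotProduct, dotProduct_smul, add_dotProduct, smul_dotProduct,
      dotProduct_add, dotProduct_add, dotProduct_smul, dotProduct_smul,
      he, hf, hef, hfe]
    simp only [smul_eq_mul, mul_zero, add_zero, zero_add, mul_one]
    push_cast at hN2 ⊢
    linear_combination hN2
  · have htr : (ρ * (Matrix.vecMulVec e (star e) * Matrix.vecMulVec d (star d)
        + Matrix.vecMulVec d (star d) * Matrix.vecMulVec e (star e))).trace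
      = (star e ⬝ᵥ d) * (star d ⬝ᵥ (ρ *ᵥ e)) + (star d ⬝ᵥ e) * (star e ⬝ᵥ (ρ *ᵥ d)) := by
      simp [Matrix.trace, Matrix.mul_apply, Matrix.vecMulVec_apply, dotProduct, Matrix.mulVec,
        Fin.sum_univ_two, Matrix.diag]
      ring
    have hH : ρᴴ = ρ := hρ.1
    have hc1 : (star d ⬝ᵥ e) = star (star e ⬝ᵥ d) := by
      simp [dotProduct, Fin.sum_univ_two, star_add, star_mul', mul_comm]
    have hc2 : (star e ⬝ᵥ (ρ *ᵥ d)) = star (star d ⬝ᵥ (ρ *ᵥ e)) := by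
      have h00 := congrFun (congrFun hH 0) 0
      have h01 := congrFun (congrFun hH 0) 1
      have h10 := congrFun (congrFun hH 1) 0
      have h11 := congrFun (congrFun hH 1) 1
      simp only [Matrix.conjTranspose_apply] at h00 h01 h10 h11
      simp only [dotProduct, Matrix.mulVec, Fin.sum_univ_two, Pi.star_apply, star_add, star_mul',
        star_star, h00, h01, h10, h11]
      ring
    rw [htr, hc1, hc2]
    have hz : ((star e ⬝ᵥ d) * (star d ⬝ᵥ (ρ *ᵥ e))
        + star ((star e ⬝ᵥ d)) * star ((star d ⬝ᵥ (ρ *ᵥ e)))).re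
        = 2 * ((star e ⬝ᵥ d) * (star d ⬝ᵥ (ρ *ᵥ e))).re := by
      rw [← star_mul']
      simp [Complex.add_re, Complex.conj_re]
      ring
    rw [hz]
    have h1 : star e ⬝ᵥ d = ((N⁻¹:ℝ):ℂ) * (t:ℂ) := by
      rw [hddef, dotProduct_smul, dotProduct_add, dotProduct_smul, he, hef]
      simp
    have h2 : star d ⬝ᵥ (ρ *ᵥ e) = ((N⁻¹:ℝ):ℂ) * ((star f ⬝ᵥ (ρ *ᵥ e)) + (t:ℂ) * (star e ⬝ᵥ (ρ *ᵥ e))) := by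
      rw [hstard, smul_dotProduct, add_dotProduct, smul_dotProduct]
      simp [mul_add]
    rw [h1, h2, re_calc N⁻¹ t γ p _ _ hγdef.symm hpdef.symm hpim]
    have hd2 : (2*(p+1)) ≠ 0 := by positivity
    have hγt : γ = -(t * (2*(p+1))) := by rw [htdef]; field_simp
    have hne : t ≠ 0 := by
      intro h
      rw [h] at hγt
      simp at hγt
      exact hγ hγt
    have hkey : t * γ + t^2 * p < 0 := by
      have heq : t * γ + t^2 * p = -(t^2 * (p + 2)) := by rw [hγt]; ring
      have ht2 : 0 < t^2 := by rw [sq]; exact mul_self_pos.mpr hne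
      rw [heq]
      nlinarith
    have hNinv : (0:ℝ) < (N⁻¹)^2 := by positivity
    nlinarith [mul_neg_of_pos_of_neg hNinv hkey]

theorem qubit_state_detected_by_projections
    (ρ : Matrix (Fin 2) (Fin 2) ℂ) (hρ : ρ.PosSemidef) (htr : ρ.trace = 1)
    (hne : ρ ≠ (2 : ℂ)⁻¹ • 1) :
    ∃ a d : Fin 2 → ℂ, star a ⬝ᵥ a = 1 ∧ star d ⬝ᵥ d = 1 ∧
      (ρ * (Matrix.vecMulVec a (star a) * Matrix.vecMulVec d (star d)
        + Matrix.vecMulVec d (star d) * Matrix.vecMulVec a (star a))).trace.re < 0 := by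
  have hH : ρᴴ = ρ := hρ.1
  have h10 : ρ 1 0 = star (ρ 0 1) := (congrFun (congrFun hH 1) 0).symm
  have h00 : star (ρ 0 0) = ρ 0 0 := congrFun (congrFun hH 0) 0
  have htr2 : ρ 0 0 + ρ 1 1 = 1 := by rw [← Matrix.trace_fin_two]; exact htr
  by_cases hre : (ρ 0 1).re ≠ 0
  · refine key ρ hρ ![1, 0] ![0, 1] ?_ ?_ ?_ ?_ <;>
      simp [dotProduct, Matrix.mulVec, Fin.sum_univ_two, h10, Complex.star_def]
    exact hre
  by_cases him : (ρ 0 1).im ≠ 0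
  · refine key ρ hρ ![1, 0] ![0, Complex.I] ?_ ?_ ?_ ?_ <;>
      simp [dotProduct, Matrix.mulVec, Fin.sum_univ_two, h10, Complex.star_def,
        Complex.ext_iff, Complex.mul_re, Complex.mul_im]
    exact him
  push_neg at hre him
  have hc : ρ 0 1 = 0 := Complex.ext hre him
  have hc' : ρ 1 0 = 0 := by rw [h10, hc]; simp
  have hp : (ρ 0 0).re ≠ 1/2 := by
    intro hhalf
    apply hne
    have him0 : (ρ 0 0).im = 0 := by
      have := congrArg Complex.im h00
      simp [Complex.star_def] at this
      linarith
    have h00v : ρ 0 0 = 1/2 := by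
      rw [Complex.ext_iff]
      norm_num [hhalf, him0]
    have h11v : ρ 1 1 = 1/2 := by linear_combination htr2 - h00v
    ext i j
    fin_cases i <;> fin_cases j <;>
      simp [Matrix.smul_apply, Matrix.one_apply, h00v, h11v, hc, hc'] <;> norm_num
  have hs2 : (((Real.sqrt 2)⁻¹ : ℝ) : ℂ) * (((Real.sqrt 2)⁻¹ : ℝ) : ℂ) * 2 = 1 := by
    have h2 : Real.sqrt 2 * Real.sqrt 2 = 2 := Real.mul_self_sqrt (by norm_num)
    have h0 : Real.sqrt 2 ≠ 0 := by positivity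
    have hr : ((Real.sqrt 2)⁻¹) * ((Real.sqrt 2)⁻¹) * 2 = (1:ℝ) := by
      rw [← mul_inv, h2]; norm_num
    exact_mod_cast congrArg (fun x:ℝ => (x:ℂ)) hr
  have hconj : (starRingEnd ℂ) (((Real.sqrt 2)⁻¹ : ℝ) : ℂ) = (((Real.sqrt 2)⁻¹ : ℝ) : ℂ) :=
    Complex.conj_ofReal _
  have h11 : ρ 1 1 = 1 - ρ 0 0 := by linear_combination htr2
  refine key ρ hρ ![(((Real.sqrt 2)⁻¹ : ℝ) : ℂ), (((Real.sqrt 2)⁻¹ : ℝ) : ℂ)]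
      ![(((Real.sqrt 2)⁻¹ : ℝ) : ℂ), -(((Real.sqrt 2)⁻¹ : ℝ) : ℂ)] ?_ ?_ ?_ ?_ <;>
    simp only [dotProduct, Matrix.mulVec, Fin.sum_univ_two, Matrix.cons_val_zero,
      Matrix.cons_val_one, Matrix.head_cons, Pi.star_apply, Complex.star_def, hconj,
      map_neg, hc, hc', h11]
  · linear_combination hs2
  · linear_combination hs2
  · ring
  · have hE : ((((Real.sqrt 2)⁻¹ : ℝ) : ℂ) * (ρ 0 0 * (((Real.sqrt 2)⁻¹ : ℝ) : ℂ) + 0 * (((Real.sqrt 2)⁻¹ : ℝ) : ℂ))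
        + -(((Real.sqrt 2)⁻¹ : ℝ) : ℂ) * (0 * (((Real.sqrt 2)⁻¹ : ℝ) : ℂ) + (1 - ρ 0 0) * (((Real.sqrt 2)⁻¹ : ℝ) : ℂ)))
        = ρ 0 0 - 1/2 := by
      linear_combination ((2 * ρ 0 0 - 1)/2) * hs2
    rw [hE]
    simpa [Complex.sub_re, sub_eq_zero] using hp
end

section
/- For any n×n density matrix ρ ≠ I/n, there exist positive semidefinite matrices X, Y ≥ 0 such that Tr(ρ(XY + YX)) < 0. -/
open scoped ComplexOrder
open Matrix

lemma outer_posSemidef {n : ℕ} (v : Fin n → ℂ) :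
    (Matrix.vecMulVec v (star v)).PosSemidef := by
  rw [Matrix.posSemidef_iff_dotProduct_mulVec]
  constructor
  · ext i j
    simp [Matrix.conjTranspose_apply, Matrix.vecMulVec_apply, mul_comm]
  · intro x
    have h : star x ⬝ᵥ (Matrix.vecMulVec v (star v) *ᵥ x)
        = star (star v ⬝ᵥ x) * (star v ⬝ᵥ x) := by
      simp only [dotProduct, Matrix.mulVec, Matrix.vecMulVec_apply, Pi.star_apply,
        star_sum, star_mul', star_star, Finset.sum_mul, Finset.mul_sum]
      rw [Finset.sum_comm]
      exact Finset.sum_congr rfl fun k _ => Finset.sum_congr rfl fun l _ => by ring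
    rw [h]
    exact star_mul_self_nonneg _

lemma outer_mul_outer {n : ℕ} (u w : Fin n → ℂ) :
    Matrix.vecMulVec u (star u) * Matrix.vecMulVec w (star w)
      = (star u ⬝ᵥ w) • Matrix.vecMulVec u (star w) := by
  ext i j
  simp only [Matrix.mul_apply, Matrix.vecMulVec_apply, Matrix.smul_apply, dotProduct,
    Pi.star_apply, smul_eq_mul, Finset.sum_mul]
  exact Finset.sum_congr rfl fun m _ => by ring

lemma trace_mul_outer {n : ℕ} (ρ : Matrix (Fin n) (Fin n) ℂ) (u w : Fin n → ℂ) :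
    (ρ * Matrix.vecMulVec u (star w)).trace = star w ⬝ᵥ (ρ *ᵥ u) := by
  simp only [Matrix.trace, Matrix.diag, Matrix.mul_apply, Matrix.vecMulVec_apply,
    dotProduct, Matrix.mulVec, Pi.star_apply, Finset.mul_sum]
  exact Finset.sum_congr rfl fun k _ => Finset.sum_congr rfl fun l _ => by ring

theorem state_not_maximally_mixed_detected {n : ℕ}
    (ρ : Matrix (Fin n) (Fin n) ℂ) (hρ : ρ.PosSemidef) (htr : ρ.trace = 1)
    (hne : ρ ≠ (n : ℂ)⁻¹ • 1) :
    ∃ X Y : Matrix (Fin n) (Fin n) ℂ, X.PosSemidef ∧ Y.PosSemidef ∧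
      (ρ * (X * Y + Y * X)).trace.re < 0 := by
  have hH : ρ.IsHermitian := hρ.1
  -- n ≠ 0
  rcases Nat.eq_zero_or_pos n with hn | hn
  · subst hn
    simp [Matrix.trace] at htr
  have hn0 : (n : ℂ) ≠ 0 := Nat.cast_ne_zero.mpr hn.ne'
  -- there exist two distinct eigenvalues
  have hex : ∃ i j : Fin n, hH.eigenvalues j < hH.eigenvalues i := by
    by_contra hc
    push_neg at hc
    have heq : ∀ i j : Fin n, hH.eigenvalues i = hH.eigenvalues j :=
      fun i j => le_antisymm (hc i j) (hc j i)
    obtain ⟨i0⟩ : Nonempty (Fin n) := ⟨⟨0, hn⟩⟩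
    set c := hH.eigenvalues i0 with hc0
    have hdiag : Matrix.diagonal (RCLike.ofReal ∘ hH.eigenvalues : Fin n → ℂ)
        = (c : ℂ) • (1 : Matrix (Fin n) (Fin n) ℂ) := by
      ext i j
      by_cases h : i = j
      · subst h; simp [Matrix.diagonal_apply_eq, heq i i0, hc0]
      · simp [Matrix.diagonal_apply_ne _ h, Matrix.one_apply_ne h, h]
    have hspec := hH.spectral_theorem
    rw [hdiag] at hspec
    have hρc : ρ = (c : ℂ) • (1 : Matrix (Fin n) (Fin n) ℂ) := by
      rw [hspec, Unitary.conjStarAlgAut_apply]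
      rw [Matrix.mul_smul, Matrix.smul_mul, mul_one]
      congr 1
      exact (Matrix.mem_unitaryGroup_iff).mp (hH.eigenvectorUnitary).2
    have htrc : (c : ℂ) * n = 1 := by
      rw [hρc] at htr
      simpa [Matrix.trace_smul, Matrix.trace_one, mul_comm] using htr
    apply hne
    rw [hρc]
    have : (c : ℂ) = (n : ℂ)⁻¹ := by field_simp at htrc ⊢; linear_combination htrc
    rw [this]
  obtain ⟨i, j, hij⟩ := hex
  have hne' : i ≠ j := fun h => by rw [h] at hij; exact lt_irrefl _ hij
  set a : ℝ := hH.eigenvalues i with ha'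
  set b : ℝ := hH.eigenvalues j with hb'
  have hb : 0 ≤ b := hρ.eigenvalues_nonneg j
  have ha : 0 < a := lt_of_le_of_lt hb hij
  have hab : 0 < a + b := by linarith
  set t : ℝ := 2 * a / (a + b) with ht'
  have ht1 : 1 < t := by rw [lt_div_iff₀ hab]; linarith
  have htb : t * b < a := by
    rw [div_mul_eq_mul_div, div_lt_iff₀ hab]; nlinarith
  set v₁ : Fin n → ℂ := ⇑(hH.eigenvectorBasis i) with hv1'
  set v₂ : Fin n → ℂ := ⇑(hH.eigenvectorBasis j) with hv2'
  -- orthonormality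
  have horth := hH.eigenvectorBasis.orthonormal
  have hinner : ∀ k l : Fin n, star (⇑(hH.eigenvectorBasis k)) ⬝ᵥ ⇑(hH.eigenvectorBasis l)
      = if k = l then 1 else 0 := by
    intro k l
    have := orthonormal_iff_ite.mp horth k l
    rw [EuclideanSpace.inner_eq_star_dotProduct] at this
    exact (dotProduct_comm _ _).trans this
  have h11 : star v₁ ⬝ᵥ v₁ = 1 := by simpa using hinner i i
  have h22 : star v₂ ⬝ᵥ v₂ = 1 := by simpa using hinner j j
  have h12 : star v₁ ⬝ᵥ v₂ = 0 := by simpa [hne'] using hinner i j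
  have h21 : star v₂ ⬝ᵥ v₁ = 0 := by simpa [hne'.symm] using hinner j i
  -- eigenvector equations
  have hmv1 : ρ *ᵥ v₁ = (a : ℂ) • v₁ := by
    have := hH.mulVec_eigenvectorBasis i
    rw [this]; funext k
    rw [Pi.smul_apply, Pi.smul_apply, Complex.real_smul, smul_eq_mul]
  have hmv2 : ρ *ᵥ v₂ = (b : ℂ) • v₂ := by
    have := hH.mulVec_eigenvectorBasis j
    rw [this]; funext k
    rw [Pi.smul_apply, Pi.smul_apply, Complex.real_smul, smul_eq_mul]
  set u : Fin n → ℂ := v₁ + v₂ with hu'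
  set w : Fin n → ℂ := v₁ - (t : ℂ) • v₂ with hw'
  refine ⟨Matrix.vecMulVec u (star u), Matrix.vecMulVec w (star w),
    outer_posSemidef u, outer_posSemidef w, ?_⟩
  have hduw : star u ⬝ᵥ w = 1 - (t : ℂ) := by
    simp [hu', hw', star_add, add_dotProduct, dotProduct_sub,
      dotProduct_smul, h11, h12, h21, h22, smul_eq_mul]
    all_goals ring
  have hdwu : star w ⬝ᵥ u = 1 - (t : ℂ) := by
    simp [hu', hw', star_sub, star_smul, sub_dotProduct, dotProduct_add,
      smul_dotProduct, h11, h12, h21, h22, smul_eq_mul, Complex.star_def,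
      Complex.conj_ofReal]
    all_goals ring
  have hρu : ρ *ᵥ u = (a : ℂ) • v₁ + (b : ℂ) • v₂ := by
    rw [hu', Matrix.mulVec_add, hmv1, hmv2]
  have hρw : ρ *ᵥ w = (a : ℂ) • v₁ - ((t : ℂ) * (b : ℂ)) • v₂ := by
    rw [hw', Matrix.mulVec_sub, Matrix.mulVec_smul, hmv1, hmv2, smul_smul]
  have hd2 : star w ⬝ᵥ (ρ *ᵥ u) = (a : ℂ) - (t : ℂ) * b := by
    rw [hρu]
    simp [hw', star_sub, star_smul, sub_dotProduct, dotProduct_add,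
      smul_dotProduct, dotProduct_smul, h11, h12, h21, h22, smul_eq_mul,
      Complex.star_def, Complex.conj_ofReal]
    ring
  have hd3 : star u ⬝ᵥ (ρ *ᵥ w) = (a : ℂ) - (t : ℂ) * b := by
    rw [hρw]
    simp [hu', star_add, add_dotProduct, dotProduct_sub,
      dotProduct_smul, h11, h12, h21, h22, smul_eq_mul]
    all_goals ring
  have htrace : (ρ * (Matrix.vecMulVec u (star u) * Matrix.vecMulVec w (star w)
      + Matrix.vecMulVec w (star w) * Matrix.vecMulVec u (star u))).trace
      = ((1 - t) * (a - t * b) + (1 - t) * (a - t * b) : ℝ) := by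
    rw [mul_add, Matrix.trace_add, outer_mul_outer u w, outer_mul_outer w u,
      Matrix.mul_smul, Matrix.trace_smul, Matrix.mul_smul, Matrix.trace_smul,
      trace_mul_outer, trace_mul_outer, hduw, hdwu, hd2, hd3]
    simp only [smul_eq_mul]
    push_cast
    ring
  rw [htrace, Complex.ofReal_re]
  nlinarith [mul_pos (sub_pos.mpr ht1) (sub_pos.mpr htb)]
end

section
/- Let B be an n×n Hermitian matrix with Tr(B) fixed, and suppose 0 ≤ A ≤ B. Then the minimal eigenvalue of B² − A², over all 2×2 Hermitian A, B with 0 ≤ A ≤ B and Tr(B) = 2, is bounded below by −4/27, and this bound is attained. -/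
open scoped ComplexOrder
open Matrix

set_option maxHeartbeats 1000000

private lemma trprod (a0 a1 c0 c1 p1 p2 q1 q2 : ℝ) (ha0 : 0 ≤ a0) (ha1 : 0 ≤ a1)
    (hc0 : 0 ≤ c0) (hc1 : 0 ≤ c1) (hdA : p1^2+p2^2 ≤ a0*a1) (hd : q1^2+q2^2 ≤ c0*c1) :
    0 ≤ a0*c0 + a1*c1 + 2*(p1*q1+p2*q2) := by
  have h1 : 0 ≤ (a0*a1 - (p1^2+p2^2)) * (q1^2+q2^2) :=
    mul_nonneg (by linarith) (by positivity)
  have h2 : 0 ≤ (a0*a1) * (c0*c1 - (q1^2+q2^2)) :=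
    mul_nonneg (mul_nonneg ha0 ha1) (by linarith)
  nlinarith [sq_nonneg (p1*q2 - p2*q1), sq_nonneg (a0*c0 - a1*c1),
    mul_nonneg ha0 hc0, mul_nonneg ha1 hc1, sq_nonneg (p1*q1+p2*q2)]

private lemma lem_det (a0 a1 c0 c1 p1 p2 q1 q2 : ℝ) (ha0 : 0 ≤ a0) (ha1 : 0 ≤ a1)
    (hc0 : 0 ≤ c0) (hc1 : 0 ≤ c1) (hdA : p1^2+p2^2 ≤ a0*a1) (hd : q1^2+q2^2 ≤ c0*c1)
    (htr : a0+a1+c0+c1 = 2) :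
    ((c0+c1)*p1+2*q1)^2 + ((c0+c1)*p2+2*q2)^2 ≤
      ((a0+c0)^2 + ((p1+q1)^2+(p2+q2)^2) - a0^2 - (p1^2+p2^2) + 4/27) *
      ((a1+c1)^2 + ((p1+q1)^2+(p2+q2)^2) - a1^2 - (p1^2+p2^2) + 4/27) := by
  have h : c1 = 2 - a0 - a1 - c0 := by linarith
  subst h
  have H1 : (0:ℝ) ≤ (54*(((a0+c0)*(a1+(2-a0-a1-c0)) - ((p1+q1)^2+(p2+q2)^2))
      - (a0*a1 - (p1^2+p2^2))) - 54*(a0+a1) + 27*(a0+a1)^2 - 8)^2 := sq_nonneg _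
  have H2 : (0:ℝ) ≤ (27*(3*(a0+a1)-4)^2) *((3*(a0+a1)+2)*(2-a0-a1)) :=
    mul_nonneg (by positivity) (mul_nonneg (by linarith) (by linarith))
  have H3 : (0:ℝ) ≤ (a0*a1 - (p1^2+p2^2)) * (a0+a1-2)^2 :=
    mul_nonneg (by linarith) (sq_nonneg _)
  have H4 : (0:ℝ) ≤ (a0+a1) * (c0*(2-a0-a1-c0) - (q1^2+q2^2)) :=
    mul_nonneg (by linarith) (by linarith)
  linarith [H1, H2, H3, H4]

private lemma form_nonneg (m0 m1 u v r0 i0 r1 i1 : ℝ)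
    (hm0 : 0 ≤ m0) (hm1 : 0 ≤ m1) (hdet : u^2 + v^2 ≤ m0*m1) :
    0 ≤ m0*(r0^2+i0^2) + m1*(r1^2+i1^2)
      + 2*(r0*(u*r1 - v*i1) + i0*(u*i1 + v*r1)) := by
  rcases eq_or_lt_of_le hm0 with h0 | h0
  · have hu : u = 0 := by nlinarith [sq_nonneg u, sq_nonneg v]
    have hv : v = 0 := by nlinarith [sq_nonneg u, sq_nonneg v]
    subst hu; subst hv
    have : 0 ≤ m1*(r1^2+i1^2) := mul_nonneg hm1 (by positivity)
    nlinarith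
  · nlinarith [sq_nonneg (m0*r0 + u*r1 - v*i1), sq_nonneg (m0*i0 + u*i1 + v*r1),
      mul_nonneg (sub_nonneg.2 hdet) (add_nonneg (sq_nonneg r1) (sq_nonneg i1)), h0]

private lemma psd_of {M : Matrix (Fin 2) (Fin 2) ℂ} (hM : M.IsHermitian)
    (htr : 0 ≤ (M 0 0).re + (M 1 1).re)
    (hdet : Complex.normSq (M 0 1) ≤ (M 0 0).re * (M 1 1).re) : M.PosSemidef := by
  have h00 : (M 0 0).im = 0 := Complex.conj_eq_iff_im.mp (hM.apply 0 0)
  have h11 : (M 1 1).im = 0 := Complex.conj_eq_iff_im.mp (hM.apply 1 1)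
  have h10 : M 1 0 = (starRingEnd ℂ) (M 0 1) := (hM.apply 1 0).symm
  have hdet' : (M 0 1).re^2 + (M 0 1).im^2 ≤ (M 0 0).re * (M 1 1).re := by
    rw [Complex.normSq_apply] at hdet; nlinarith [hdet]
  have hm0 : 0 ≤ (M 0 0).re := by
    nlinarith [Complex.normSq_nonneg (M 0 1), Complex.normSq_apply (M 0 1)]
  have hm1 : 0 ≤ (M 1 1).re := by
    nlinarith [Complex.normSq_nonneg (M 0 1), Complex.normSq_apply (M 0 1)]
  refine Matrix.PosSemidef.of_dotProduct_mulVec_nonneg hM fun x => ?_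
  have hx : dotProduct (star x) (M *ᵥ x) =
      (starRingEnd ℂ) (x 0) * (M 0 0 * x 0 + M 0 1 * x 1)
      + (starRingEnd ℂ) (x 1) * (M 1 0 * x 0 + M 1 1 * x 1) := by
    simp [dotProduct, Matrix.mulVec, Fin.sum_univ_two, Matrix.vecHead, Matrix.vecTail]
  rw [hx, h10, Complex.le_def]
  constructor
  · simp only [Complex.add_re, Complex.mul_re, Complex.add_im, Complex.mul_im,
      Complex.conj_re, Complex.conj_im, Complex.zero_re, h00, h11]
    nlinarith [form_nonneg (M 0 0).re (M 1 1).re (M 0 1).re (M 0 1).im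
      (x 0).re (x 0).im (x 1).re (x 1).im hm0 hm1 hdet']
  · simp only [Complex.add_im, Complex.mul_im, Complex.mul_re, Complex.add_re,
      Complex.conj_re, Complex.conj_im, Complex.zero_im, h00, h11]
    ring

private lemma psd_entries {M : Matrix (Fin 2) (Fin 2) ℂ} (h : M.PosSemidef) :
    0 ≤ (M 0 0).re ∧ 0 ≤ (M 1 1).re ∧
      (M 0 1).re^2 + (M 0 1).im^2 ≤ (M 0 0).re * (M 1 1).re := by
  have h00 : (M 0 0).im = 0 := Complex.conj_eq_iff_im.mp (h.1.apply 0 0)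
  have h11 : (M 1 1).im = 0 := Complex.conj_eq_iff_im.mp (h.1.apply 1 1)
  have h10 : M 1 0 = (starRingEnd ℂ) (M 0 1) := (h.1.apply 1 0).symm
  have hd : 0 ≤ (M.det).re := by
    rw [h.1.det_eq_prod_eigenvalues, Fin.prod_univ_two]
    have := mul_nonneg (h.eigenvalues_nonneg 0) (h.eigenvalues_nonneg 1)
    simpa using this
  rw [Matrix.det_fin_two, h10] at hd
  have e1 : 0 ≤ (M 0 0).re := by
    have := h.re_dotProduct_nonneg ![1, 0]
    simpa [dotProduct, Matrix.mulVec, Fin.sum_univ_two, Matrix.vecHead, Matrix.vecTail] using this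
  have e2 : 0 ≤ (M 1 1).re := by
    have := h.re_dotProduct_nonneg ![0, 1]
    simpa [dotProduct, Matrix.mulVec, Fin.sum_univ_two, Matrix.vecHead, Matrix.vecTail] using this
  refine ⟨e1, e2, ?_⟩
  simp only [Complex.sub_re, Complex.mul_re, Complex.conj_re, Complex.conj_im,
    h00, h11] at hd
  nlinarith [hd]

theorem qubit_witness_min_eigenvalue_bound :
    (∀ A B : Matrix (Fin 2) (Fin 2) ℂ, A.IsHermitian → B.IsHermitian →
      A.PosSemidef → (B - A).PosSemidef → B.trace = 2 →
      (B * B - A * A + (4 / 27 : ℂ) • 1).PosSemidef) ∧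
    (∃ A B : Matrix (Fin 2) (Fin 2) ℂ, A.IsHermitian ∧ B.IsHermitian ∧
      A.PosSemidef ∧ (B - A).PosSemidef ∧ B.trace = 2 ∧
      ∃ v : Fin 2 → ℂ, v ≠ 0 ∧
        (B * B - A * A) *ᵥ v = (-(4 / 27) : ℂ) • v) := by
  constructor
  · intro A B hAh hBh hA0 hBA htr
    have hBtr : B 0 0 + B 1 1 = 2 := by
      rw [Matrix.trace_fin_two] at htr; exact htr
    have hbre : (B 0 0).re + (B 1 1).re = 2 := by
      have := congrArg Complex.re hBtr; simpa using this
    have hA00im : (A 0 0).im = 0 := Complex.conj_eq_iff_im.mp (hAh.apply 0 0)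
    have hA11im : (A 1 1).im = 0 := Complex.conj_eq_iff_im.mp (hAh.apply 1 1)
    have hB00im : (B 0 0).im = 0 := Complex.conj_eq_iff_im.mp (hBh.apply 0 0)
    have hB11im : (B 1 1).im = 0 := Complex.conj_eq_iff_im.mp (hBh.apply 1 1)
    have hA10 : A 1 0 = (starRingEnd ℂ) (A 0 1) := (hAh.apply 1 0).symm
    have hB10 : B 1 0 = (starRingEnd ℂ) (B 0 1) := (hBh.apply 1 0).symm
    obtain ⟨ha0, ha1, hdA⟩ := psd_entries hA0
    have hCfacts := psd_entries hBA
    simp only [Matrix.sub_apply, Complex.sub_re, Complex.sub_im] at hCfacts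
    obtain ⟨hc0, hc1, hd⟩ := hCfacts
    set M := B * B - A * A + (4 / 27 : ℂ) • 1 with hM
    have e1 : (M 0 0).re = (B 0 0).re^2 + ((B 0 1).re^2 + (B 0 1).im^2)
        - (A 0 0).re^2 - ((A 0 1).re^2 + (A 0 1).im^2) + 4/27 := by
      simp only [hM, Matrix.add_apply, Matrix.sub_apply, Matrix.smul_apply,
        Matrix.mul_apply, Fin.sum_univ_two, Matrix.one_apply_eq, smul_eq_mul, mul_one,
        hA10, hB10, Complex.add_re, Complex.sub_re, Complex.mul_re,
        Complex.conj_re, Complex.conj_im, hA00im, hB00im]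
      norm_num; ring
    have e2 : (M 1 1).re = (B 1 1).re^2 + ((B 0 1).re^2 + (B 0 1).im^2)
        - (A 1 1).re^2 - ((A 0 1).re^2 + (A 0 1).im^2) + 4/27 := by
      simp only [hM, Matrix.add_apply, Matrix.sub_apply, Matrix.smul_apply,
        Matrix.mul_apply, Fin.sum_univ_two, Matrix.one_apply_eq, smul_eq_mul, mul_one,
        hA10, hB10, Complex.add_re, Complex.sub_re, Complex.mul_re,
        Complex.conj_re, Complex.conj_im, hA11im, hB11im]
      norm_num; ring
    have e3 : (M 0 1).re = 2*(B 0 1).re - ((A 0 0).re + (A 1 1).re)*(A 0 1).re := by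
      have h01 : M 0 1 = B 0 0 * B 0 1 + B 0 1 * B 1 1
          - (A 0 0 * A 0 1 + A 0 1 * A 1 1) := by
        simp only [hM, Matrix.add_apply, Matrix.sub_apply, Matrix.smul_apply,
          Matrix.mul_apply, Fin.sum_univ_two]
        have : (1 : Matrix (Fin 2) (Fin 2) ℂ) 0 1 = 0 := by
          simp [Matrix.one_apply]
        rw [this, smul_zero]; ring
      rw [h01]
      simp only [Complex.sub_re, Complex.add_re, Complex.mul_re,
        hA00im, hA11im, hB00im, hB11im]
      linear_combination (B 0 1).re * hbre
    have e4 : (M 0 1).im = 2*(B 0 1).im - ((A 0 0).re + (A 1 1).re)*(A 0 1).im := by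
      have h01 : M 0 1 = B 0 0 * B 0 1 + B 0 1 * B 1 1
          - (A 0 0 * A 0 1 + A 0 1 * A 1 1) := by
        simp only [hM, Matrix.add_apply, Matrix.sub_apply, Matrix.smul_apply,
          Matrix.mul_apply, Fin.sum_univ_two]
        have : (1 : Matrix (Fin 2) (Fin 2) ℂ) 0 1 = 0 := by
          simp [Matrix.one_apply]
        rw [this, smul_zero]; ring
      rw [h01]
      simp only [Complex.sub_im, Complex.add_im, Complex.mul_im,
        hA00im, hA11im, hB00im, hB11im]
      linear_combination (B 0 1).im * hbre
    have hMh : M.IsHermitian := by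
      have h1 : (B*B).IsHermitian := by
        rw [Matrix.IsHermitian, Matrix.conjTranspose_mul, hBh.eq]
      have h2 : (A*A).IsHermitian := by
        rw [Matrix.IsHermitian, Matrix.conjTranspose_mul, hAh.eq]
      have h3 : ((4/27 : ℂ) • (1 : Matrix (Fin 2) (Fin 2) ℂ)).IsHermitian := by
        rw [Matrix.IsHermitian, Matrix.conjTranspose_smul, Matrix.conjTranspose_one]
        norm_num
      exact (h1.sub h2).add h3
    apply psd_of hMh
    · rw [e1, e2]
      have key := trprod (A 0 0).re (A 1 1).re ((B 0 0).re - (A 0 0).re)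
        ((B 1 1).re - (A 1 1).re) (A 0 1).re (A 0 1).im
        ((B 0 1).re - (A 0 1).re) ((B 0 1).im - (A 0 1).im) ha0 ha1 hc0 hc1 hdA hd
      nlinarith [key, sq_nonneg ((B 0 0).re - (A 0 0).re), sq_nonneg ((B 1 1).re - (A 1 1).re),
        sq_nonneg ((B 0 1).re - (A 0 1).re), sq_nonneg ((B 0 1).im - (A 0 1).im)]
    · rw [Complex.normSq_apply, e1, e2, e3, e4]
      have key := lem_det (A 0 0).re (A 1 1).re ((B 0 0).re - (A 0 0).re)
        ((B 1 1).re - (A 1 1).re) (A 0 1).re (A 0 1).im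
        ((B 0 1).re - (A 0 1).re) ((B 0 1).im - (A 0 1).im) ha0 ha1 hc0 hc1 hdA hd
        (by linarith)
      have hb1 : (B 1 1).re = 2 - (B 0 0).re := by linarith
      rw [hb1] at key ⊢
      linarith [key]
  · have h2 : ((Real.sqrt 2 : ℝ) : ℂ)^2 = 2 := by
      rw [← Complex.ofReal_pow, Real.sq_sqrt (by norm_num : (2:ℝ) ≥ 0)]
      norm_num
    set s : ℂ := ((Real.sqrt 2 : ℝ) : ℂ) with hs
    set A : Matrix (Fin 2) (Fin 2) ℂ := !![4/3, 0; 0, 0] with hA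
    set B : Matrix (Fin 2) (Fin 2) ℂ := !![14/9, 2*s/9; 2*s/9, 4/9] with hB
    have hAh : A.IsHermitian := by
      ext i j
      fin_cases i <;> fin_cases j <;>
        simp [hA, Matrix.conjTranspose_apply, Complex.ext_iff]
    have hBh : B.IsHermitian := by
      ext i j
      fin_cases i <;> fin_cases j <;>
        simp [hB, hs, Matrix.conjTranspose_apply, ← Complex.ofReal_ofNat,
          ← Complex.ofReal_mul, ← Complex.ofReal_div, Complex.conj_ofReal]
    have hApsd : A.PosSemidef := by
      apply psd_of hAh <;> simp [hA] <;> norm_num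
    have hBA : (B - A).PosSemidef := by
      have hBAh : (B - A).IsHermitian := hBh.sub hAh
      apply psd_of hBAh
      · simp [hA, hB]; norm_num
      · have e : (B - A) 0 1 = 2*s/9 := by simp [hA, hB]
        rw [e]
        have e2 : Complex.normSq (2*s/9) = 8/81 := by
          rw [hs]
          rw [show (2*((Real.sqrt 2 : ℝ):ℂ)/9) = ((2*Real.sqrt 2/9 : ℝ) : ℂ) by push_cast; ring]
          rw [Complex.normSq_ofReal]
          have := Real.mul_self_sqrt (by norm_num : (0:ℝ) ≤ 2)
          nlinarith [this]
        rw [e2]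
        have : (B - A) 0 0 = 2/9 := by simp [hA, hB]; norm_num
        rw [this]
        have : (B - A) 1 1 = 4/9 := by simp [hA, hB]
        rw [this]
        norm_num
    have htrB : B.trace = 2 := by
      simp [Matrix.trace_fin_two, hB]
      norm_num
    have hv : (B * B - A * A) *ᵥ ![1, -s] = (-(4/27) : ℂ) • ![1, -s] := by
      funext i
      fin_cases i
      · simp [hA, hB, Matrix.mulVec, dotProduct, Matrix.mul_apply, Matrix.vecHead, Matrix.vecTail,
          Fin.sum_univ_two, Matrix.sub_apply]
        linear_combination (-32/81 : ℂ) * h2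
      · simp [hA, hB, Matrix.mulVec, dotProduct, Matrix.mul_apply, Matrix.vecHead, Matrix.vecTail,
          Fin.sum_univ_two, Matrix.sub_apply]
        linear_combination ((-4/81 : ℂ) * s) * h2
    refine ⟨A, B, hAh, hBh, hApsd, hBA, htrB, ![1, -s], ?_, hv⟩
    intro h
    have := congrFun h 0
    simp at this
end

section
/- Under the hypotheses of the collective-observable decomposition, if the minimal eigenvalue of b² − a² is −μ with μ > 0, then the minimal eigenvalue of B² − A² = ((1/N)Σaᵢ)² vs ((1/N)Σbᵢ)² difference satisfies λ_min(B² − A²) ≥ −μ/N. -/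
open scoped ComplexOrder
open Matrix Finset

/-- The single-particle operator `m` acting on the `i`-th factor of the `N`-fold
tensor product `(ℂ^d)^{⊗N}`, realized as a matrix indexed by `Fin N → Fin d`. -/
def embed {d N : ℕ} (m : Matrix (Fin d) (Fin d) ℂ) (i : Fin N) :
    Matrix (Fin N → Fin d) (Fin N → Fin d) ℂ :=
  Matrix.of fun x y =>
    m (x i) (y i) * ∏ j ∈ Finset.univ.erase i, (if x j = y j then (1 : ℂ) else 0)

-- helper: collapse a sum over functions to a sum over the i-th coordinate
lemma sum_update {d N : ℕ} (i : Fin N) (x : Fin N → Fin d) (F : (Fin N → Fin d) → ℂ)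
    (hF : ∀ z, (∃ k, k ≠ i ∧ z k ≠ x k) → F z = 0) :
    ∑ z, F z = ∑ t, F (Function.update x i t) := by
  have hinj : Function.Injective (Function.update x i) := by
    intro s t h
    have := congrFun h i
    simpa using this
  have himg : ∑ t, F (Function.update x i t)
      = ∑ z ∈ Finset.univ.image (Function.update x i), F z :=
    (Finset.sum_image (by intro s _ t _ h; exact hinj h)).symm
  rw [himg]
  symm
  apply Finset.sum_subset (Finset.subset_univ _)
  intro z _ hz
  apply hF
  by_contra hcon
  push_neg at hcon
  apply hz
  simp only [Finset.mem_image, Finset.mem_univ, true_and]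
  refine ⟨z i, ?_⟩
  funext k
  rcases eq_or_ne k i with rfl | hk
  · simp
  · rw [Function.update_of_ne hk]
    exact (hcon k hk).symm

lemma embed_conjTranspose {d N : ℕ} (m : Matrix (Fin d) (Fin d) ℂ) (i : Fin N) :
    (embed m i)ᴴ = embed mᴴ i := by
  ext x y
  show star (m (y i) (x i) * ∏ j ∈ Finset.univ.erase i, (if y j = x j then (1:ℂ) else 0))
      = mᴴ (x i) (y i) * ∏ j ∈ Finset.univ.erase i, (if x j = y j then (1:ℂ) else 0)
  have hP : star (∏ j ∈ Finset.univ.erase i, (if y j = x j then (1:ℂ) else 0))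
      = ∏ j ∈ Finset.univ.erase i, (if x j = y j then (1:ℂ) else 0) := by
    rw [star_prod]
    exact Finset.prod_congr rfl fun j _ => by by_cases h : x j = y j <;> simp [h, eq_comm]
  rw [star_mul', hP, conjTranspose_apply, mul_comm]

lemma embed_mul_same {d N : ℕ} (m m' : Matrix (Fin d) (Fin d) ℂ) (i : Fin N) :
    embed m i * embed m' i = embed (m * m') i := by
  ext x y
  rw [mul_apply]
  rw [sum_update i x]
  · simp only [embed, Matrix.of_apply, Function.update_self]
    have h1 : ∀ t : Fin d, ∏ j ∈ Finset.univ.erase i,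
        (if x j = Function.update x i t j then (1:ℂ) else 0) = 1 := by
      intro t
      apply Finset.prod_eq_one
      intro j hj
      rw [Function.update_of_ne (Finset.ne_of_mem_erase hj)]
      simp
    have h2 : ∀ t : Fin d, ∀ j ∈ Finset.univ.erase i,
        (if Function.update x i t j = y j then (1:ℂ) else 0) = (if x j = y j then (1:ℂ) else 0) := by
      intro t j hj
      rw [Function.update_of_ne (Finset.ne_of_mem_erase hj)]
    calc ∑ t, m (x i) t * (∏ j ∈ Finset.univ.erase i, (if x j = Function.update x i t j then (1:ℂ) else 0)) *
          (m' t (y i) * ∏ j ∈ Finset.univ.erase i, (if Function.update x i t j = y j then (1:ℂ) else 0))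
        = ∑ t, m (x i) t * m' t (y i) * ∏ j ∈ Finset.univ.erase i, (if x j = y j then (1:ℂ) else 0) := by
          refine Finset.sum_congr rfl fun t _ => ?_
          rw [h1 t, Finset.prod_congr rfl (h2 t)]
          ring
      _ = (m * m') (x i) (y i) * ∏ j ∈ Finset.univ.erase i, (if x j = y j then (1:ℂ) else 0) := by
          rw [← Finset.sum_mul, mul_apply]
  · intro z ⟨k, hk, hzk⟩
    simp only [embed, Matrix.of_apply]
    have : (∏ j ∈ Finset.univ.erase i, (if x j = z j then (1:ℂ) else 0)) = 0 := by
      apply Finset.prod_eq_zero (Finset.mem_erase.2 ⟨hk, Finset.mem_univ k⟩)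
      simp [Ne.symm hzk]
    rw [this]
    ring

def embed2 {d N : ℕ} (m m' : Matrix (Fin d) (Fin d) ℂ) (i j : Fin N) :
    Matrix (Fin N → Fin d) (Fin N → Fin d) ℂ :=
  Matrix.of fun x y =>
    m (x i) (y i) * m' (x j) (y j) *
      ∏ k ∈ (Finset.univ.erase j).erase i, (if x k = y k then (1 : ℂ) else 0)

lemma embed_mul_ne {d N : ℕ} (m m' : Matrix (Fin d) (Fin d) ℂ) {i j : Fin N} (hij : i ≠ j) :
    embed m i * embed m' j = embed2 m m' i j := by
  ext x y
  rw [mul_apply]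
  rw [sum_update i x]
  · have hi : i ∈ Finset.univ.erase j := Finset.mem_erase.2 ⟨hij, Finset.mem_univ i⟩
    have key : ∀ t : Fin d,
        embed m i x (Function.update x i t) * embed m' j (Function.update x i t) y
        = (if t = y i then m (x i) t * (m' (x j) (y j) *
            ∏ k ∈ (Finset.univ.erase j).erase i, (if x k = y k then (1:ℂ) else 0)) else 0) := by
      intro t
      simp only [embed, Matrix.of_apply, Function.update_self]
      have h1 : ∏ k ∈ Finset.univ.erase i,
          (if x k = Function.update x i t k then (1:ℂ) else 0) = 1 := by
        apply Finset.prod_eq_one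
        intro k hk
        rw [Function.update_of_ne (Finset.ne_of_mem_erase hk)]
        simp
      have h2 : ∏ k ∈ Finset.univ.erase j,
          (if Function.update x i t k = y k then (1:ℂ) else 0)
          = (if t = y i then (1:ℂ) else 0) *
            ∏ k ∈ (Finset.univ.erase j).erase i, (if x k = y k then (1:ℂ) else 0) := by
        rw [← Finset.mul_prod_erase _ _ hi, Function.update_self]
        congr 1
        refine Finset.prod_congr rfl fun k hk => ?_
        rw [Function.update_of_ne (Finset.ne_of_mem_erase hk)]
      rw [h1, h2, Function.update_of_ne (Ne.symm hij)]
      by_cases h : t = y i <;> simp [h]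
    rw [Finset.sum_congr rfl fun t _ => key t, Finset.sum_ite_eq' Finset.univ (y i)]
    simp only [Finset.mem_univ, if_true, embed2, Matrix.of_apply]
    ring
  · intro z ⟨k, hk, hzk⟩
    simp only [embed, Matrix.of_apply]
    have : (∏ l ∈ Finset.univ.erase i, (if x l = z l then (1:ℂ) else 0)) = 0 := by
      apply Finset.prod_eq_zero (Finset.mem_erase.2 ⟨hk, Finset.mem_univ k⟩)
      simp [Ne.symm hzk]
    rw [this]
    ring

lemma embed_comm {d N : ℕ} (m m' : Matrix (Fin d) (Fin d) ℂ) {i j : Fin N} (hij : i ≠ j) :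
    embed m i * embed m' j = embed m' j * embed m i := by
  rw [embed_mul_ne m m' hij, embed_mul_ne m' m (Ne.symm hij)]
  ext x y
  simp only [embed2, Matrix.of_apply]
  rw [Finset.erase_right_comm]
  ring

lemma embed_sub {d N : ℕ} (m m' : Matrix (Fin d) (Fin d) ℂ) (i : Fin N) :
    embed (m - m') i = embed m i - embed m' i := by
  ext x y
  simp [embed, sub_mul]

lemma embed_add {d N : ℕ} (m m' : Matrix (Fin d) (Fin d) ℂ) (i : Fin N) :
    embed (m + m') i = embed m i + embed m' i := by
  ext x y
  simp [embed, add_mul]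

lemma embed_smul {d N : ℕ} (c : ℂ) (m : Matrix (Fin d) (Fin d) ℂ) (i : Fin N) :
    embed (c • m) i = c • embed m i := by
  ext x y
  simp [embed, mul_assoc]

lemma embed_one {d N : ℕ} (i : Fin N) :
    embed (1 : Matrix (Fin d) (Fin d) ℂ) i = 1 := by
  ext x y
  simp only [embed, Matrix.of_apply, Matrix.one_apply]
  rcases eq_or_ne x y with rfl | hxy
  · simp
  · have : ¬ (∀ k, x k = y k) := fun h => hxy (funext h)
    push_neg at this
    obtain ⟨k, hk⟩ := this
    rcases eq_or_ne k i with rfl | hki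
    · simp [hk, hxy]
    · rw [Finset.prod_eq_zero (Finset.mem_erase.2 ⟨hki, Finset.mem_univ k⟩) (by simp [hk])]
      simp [hxy]

open scoped MatrixOrder in
lemma embed_posSemidef {d N : ℕ} {m : Matrix (Fin d) (Fin d) ℂ} (hm : m.PosSemidef)
    (i : Fin N) : (embed m i).PosSemidef := by
  have h := Matrix.posSemidef_conjTranspose_mul_self (embed (CFC.sqrt m) i)
  rwa [embed_conjTranspose, (CFC.sqrt_nonneg m).posSemidef.isHermitian.eq, embed_mul_same,
    CFC.sqrt_mul_sqrt_self m hm.nonneg] at h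

open scoped MatrixOrder in
lemma embed_mul_posSemidef {d N : ℕ} {m m' : Matrix (Fin d) (Fin d) ℂ}
    (hm : m.PosSemidef) (hm' : m'.PosSemidef) {i j : Fin N} (hij : i ≠ j) :
    (embed m i * embed m' j).PosSemidef := by
  have key : embed m i * embed m' j
      = (embed (CFC.sqrt m) i * embed (CFC.sqrt m') j) * (embed (CFC.sqrt m) i * embed (CFC.sqrt m') j)ᴴ := by
    rw [Matrix.conjTranspose_mul, embed_conjTranspose, embed_conjTranspose,
      (CFC.sqrt_nonneg m).posSemidef.isHermitian.eq, (CFC.sqrt_nonneg m').posSemidef.isHermitian.eq]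
    symm
    calc embed (CFC.sqrt m) i * embed (CFC.sqrt m') j * (embed (CFC.sqrt m') j * embed (CFC.sqrt m) i)
        = embed (CFC.sqrt m) i * (embed (CFC.sqrt m') j * embed (CFC.sqrt m') j) * embed (CFC.sqrt m) i := by
          noncomm_ring
      _ = embed (CFC.sqrt m) i * embed m' j * embed (CFC.sqrt m) i := by
          rw [embed_mul_same, CFC.sqrt_mul_sqrt_self m' hm'.nonneg]
      _ = embed (CFC.sqrt m) i * embed (CFC.sqrt m) i * embed m' j := by
          rw [mul_assoc, embed_comm m' (CFC.sqrt m) (Ne.symm hij), ← mul_assoc]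
      _ = embed m i * embed m' j := by
          rw [embed_mul_same, CFC.sqrt_mul_sqrt_self m hm.nonneg]
  rw [key]
  exact Matrix.posSemidef_self_mul_conjTranspose _

lemma posSemidef_sum {n α : Type*} [Fintype n] (s : Finset α)
    (f : α → Matrix n n ℂ) (h : ∀ i ∈ s, (f i).PosSemidef) :
    (∑ i ∈ s, f i).PosSemidef :=
  Finset.sum_induction f _ (fun _ _ ha hb => ha.add hb) Matrix.PosSemidef.zero h

lemma posSemidef_real_smul {n : Type*} [Fintype n] {M : Matrix n n ℂ}
    (hM : M.PosSemidef) {r : ℝ} (hr : 0 ≤ r) : (((r : ℂ)) • M).PosSemidef := by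
  refine Matrix.PosSemidef.of_dotProduct_mulVec_nonneg ?_ ?_
  · have h1 : star (r : ℂ) = (r : ℂ) := by simp [Complex.conj_ofReal]
    rw [Matrix.IsHermitian, Matrix.conjTranspose_smul, h1, hM.1.eq]
  · intro x
    rw [Matrix.smul_mulVec, dotProduct_smul, smul_eq_mul]
    exact mul_nonneg (by exact_mod_cast Complex.zero_le_real.2 hr) (hM.dotProduct_mulVec_nonneg x)

theorem collective_witness_eigenvalue_bound {d N : ℕ}
    (a b : Matrix (Fin d) (Fin d) ℂ) (ha : a.IsHermitian) (hb : b.IsHermitian)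
    (ha0 : a.PosSemidef) (hab : (b - a).PosSemidef)
    (μ : ℝ) (hμ : 0 < μ)
    (hlow : (b * b - a * a + (μ : ℂ) • 1).PosSemidef)
    (hmin : ∃ v : Fin d → ℂ, v ≠ 0 ∧ (b * b - a * a) *ᵥ v = (-(μ : ℂ)) • v)
    (A B : Matrix (Fin N → Fin d) (Fin N → Fin d) ℂ)
    (hA : A = (N : ℂ)⁻¹ • ∑ i : Fin N, embed a i)
    (hB : B = (N : ℂ)⁻¹ • ∑ i : Fin N, embed b i) :
    (B * B - A * A + ((μ / N : ℝ) : ℂ) • 1).PosSemidef := by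
  rcases Nat.eq_zero_or_pos N with hN | hN
  · subst hN
    have : A = 0 := by simp [hA]
    have hB0 : B = 0 := by simp [hB]
    rw [this, hB0]
    simp only [mul_zero, sub_zero, zero_add, Nat.cast_zero, div_zero, Complex.ofReal_zero,
      zero_smul]
    exact Matrix.PosSemidef.zero
  · have hNc : (N : ℂ) ≠ 0 := Nat.cast_ne_zero.2 hN.ne'
    have hNr : (N : ℝ) ≠ 0 := Nat.cast_ne_zero.2 hN.ne'
    have hb0 : b.PosSemidef := by
      have := hab.add ha0; simpa using this
    set Sa := ∑ i : Fin N, embed a i with hSa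
    set Sb := ∑ i : Fin N, embed b i with hSb
    set S1 := ∑ i : Fin N, embed (b * b - a * a + (μ : ℂ) • 1) i with hS1def
    set S2 := ∑ i : Fin N, ∑ j ∈ Finset.univ.erase i,
      (embed b i * embed (b - a) j + embed (b - a) i * embed a j) with hS2def
    have hS1 : S1.PosSemidef :=
      posSemidef_sum _ _ fun i _ => embed_posSemidef hlow i
    have hS2 : S2.PosSemidef := by
      refine posSemidef_sum _ _ fun i _ => posSemidef_sum _ _ fun j hj => ?_
      have hij : i ≠ j := (Finset.ne_of_mem_erase hj).symm
      exact (embed_mul_posSemidef hb0 hab hij).add (embed_mul_posSemidef hab ha0 hij)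
    have hper : ∀ i : Fin N,
        embed (b * b - a * a + (μ : ℂ) • 1) i
          + ∑ j ∈ Finset.univ.erase i, (embed b i * embed (b - a) j + embed (b - a) i * embed a j)
        = ((∑ j : Fin N, embed b i * embed b j) - ∑ j : Fin N, embed a i * embed a j)
          + (μ : ℂ) • 1 := by
      intro i
      have hb2 : embed (b * b - a * a + (μ : ℂ) • 1) i
          = embed b i * embed b i - embed a i * embed a i + (μ : ℂ) • 1 := by
        rw [embed_add, embed_sub, embed_smul, embed_one, ← embed_mul_same, ← embed_mul_same]
      have hterm : ∀ j ∈ Finset.univ.erase i,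
          embed b i * embed (b - a) j + embed (b - a) i * embed a j
          = embed b i * embed b j - embed a i * embed a j := by
        intro j _
        rw [embed_sub, embed_sub]
        noncomm_ring
      rw [hb2, Finset.sum_congr rfl hterm, Finset.sum_sub_distrib,
        ← Finset.add_sum_erase _ (fun j => embed b i * embed b j) (Finset.mem_univ i),
        ← Finset.add_sum_erase _ (fun j => embed a i * embed a j) (Finset.mem_univ i)]
      abel
    have hS12 : S1 + S2 = Sb * Sb - Sa * Sa + ((N : ℂ) * (μ : ℂ)) • 1 := by
      rw [hS1def, hS2def, ← Finset.sum_add_distrib,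
        Finset.sum_congr rfl fun i _ => hper i, Finset.sum_add_distrib,
        Finset.sum_sub_distrib, hSa, hSb, ← Finset.sum_mul_sum, ← Finset.sum_mul_sum,
        Finset.sum_const, Finset.card_univ, Fintype.card_fin, ← Nat.cast_smul_eq_nsmul ℂ,
        smul_smul]
    have hkey : B * B - A * A + ((μ / N : ℝ) : ℂ) • 1
        = ((((N : ℝ)⁻¹ ^ 2 : ℝ)) : ℂ) • (S1 + S2) := by
      rw [hA, hB, hS12, smul_mul_smul_comm, smul_mul_smul_comm, smul_add, smul_sub,
        smul_smul]
      have hc : ((((N : ℝ)⁻¹ ^ 2 : ℝ)) : ℂ) = (N : ℂ)⁻¹ * (N : ℂ)⁻¹ := by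
        push_cast; ring
      rw [hc]
      congr 2
      rw [div_eq_mul_inv]
      push_cast
      field_simp
    rw [hkey]
    exact posSemidef_real_smul (hS1.add hS2) (by positivity)
end
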